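/- arXiv:2306.08800 — 2 statements merged into one kernel-verified Lean document; each statement's English description precedes it below -/
import Mathlib

section
/- Let (X,d) be a connected Robinson space with |X| ≥ 2 and d(x,y) > 0 for all distinct x,y ∈ X, and let C be a connected component of the graph G_{<δ*}. Then either C is a union of maximal mmodules of (X,d), or there exists a maximal mmodule M of (X,d) with diam(M) = δ* such that C is a connected component of the graph G_{δ*} restricted to M. -/
structure Dissim (X : Type*) where
  d : X → X → ℝ
  symm : ∀ x y, d x y = d y x
  nonneg : ∀ x y, 0 ≤ d x y
  self : ∀ x, d x x = 0

variable {X : Type*}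

def Compatible (D : Dissim X) (lt : X → X → Prop) : Prop :=
  ∀ x y z : X, lt x y → lt y z → D.d x y ≤ D.d x z ∧ D.d y z ≤ D.d x z

def IsCompatOrder (D : Dissim X) (lt : X → X → Prop) : Prop :=
  IsStrictTotalOrder X lt ∧ Compatible D lt

def Robinson (D : Dissim X) : Prop :=
  ∃ lt : X → X → Prop, IsCompatOrder D lt

def IsMmodule (D : Dissim X) (M : Set X) : Prop :=
  ∀ z ∉ M, ∀ x ∈ M, ∀ y ∈ M, D.d z x = D.d z y

def IsInterval (lt : X → X → Prop) (I : Set X) : Prop :=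
  ∀ a b c : X, lt a b → lt b c → a ∈ I → c ∈ I → b ∈ I

def IsBlock (D : Dissim X) (Y : Set X) : Prop :=
  ∀ lt : X → X → Prop, IsCompatOrder D lt → IsInterval lt Y

noncomputable def diam (D : Dissim X) (Y : Set X) : ℝ :=
  sSup (Set.image2 D.d Y Y)

def Gdelta (D : Dissim X) (δ : ℝ) : SimpleGraph X where
  Adj x y := x ≠ y ∧ D.d x y ≠ δ
  symm := by
    constructor
    rintro x y ⟨hxy, hd⟩
    exact ⟨hxy.symm, by rw [D.symm]; exact hd⟩
  loopless := by constructor; rintro x ⟨h, -⟩; exact h rfl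

def Gle (D : Dissim X) (δ : ℝ) : SimpleGraph X where
  Adj x y := x ≠ y ∧ D.d x y ≤ δ
  symm := by
    constructor
    rintro x y ⟨hxy, hd⟩
    exact ⟨hxy.symm, by rw [D.symm]; exact hd⟩
  loopless := by constructor; rintro x ⟨h, -⟩; exact h rfl

def Glt (D : Dissim X) (δ : ℝ) : SimpleGraph X where
  Adj x y := x ≠ y ∧ D.d x y < δ
  symm := by
    constructor
    rintro x y ⟨hxy, hd⟩
    exact ⟨hxy.symm, by rw [D.symm]; exact hd⟩
  loopless := by constructor; rintro x ⟨h, -⟩; exact h rfl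

def IsCompOf {V : Type*} (G : SimpleGraph V) (C : Set V) : Prop :=
  ∃ x : V, C = {y | G.Reachable x y}

def MMax (D : Dissim X) : Set (Set X) :=
  {M | IsMmodule D M ∧ M ≠ Set.univ ∧
    ∀ M' : Set X, IsMmodule D M' → M' ≠ Set.univ → M ⊆ M' → M = M'}

def IsPartition {α : Type*} (P : Set (Set α)) : Prop :=
  (∀ A ∈ P, A.Nonempty) ∧
  (∀ A ∈ P, ∀ B ∈ P, A ≠ B → Disjoint A B) ∧
  ⋃₀ P = Set.univ

def IsCopartition {α : Type*} (P : Set (Set α)) : Prop :=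
  IsPartition ((fun M => Mᶜ) '' P)

def SimpleGraph.restrictTo {V : Type*} (G : SimpleGraph V) (S : Set V) : SimpleGraph V where
  Adj x y := x ∈ S ∧ y ∈ S ∧ G.Adj x y
  symm := by constructor; rintro x y ⟨hx, hy, h⟩; exact ⟨hy, hx, h.symm⟩
  loopless := by constructor; rintro x ⟨-, -, h⟩; exact G.ne_of_adj h rfl

def ConnectedWithin {V : Type*} (G : SimpleGraph V) (S : Set V) : Prop :=
  S.Nonempty ∧ ∀ x ∈ S, ∀ y ∈ S, (G.restrictTo S).Reachable x y

def IsCompWithin {V : Type*} (G : SimpleGraph V) (S : Set V) (C : Set V) : Prop :=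
  ∃ x ∈ S, C = {y | (G.restrictTo S).Reachable x y}

def IsStrictTotalOrderOn {α : Type*} (S : Set α) (lt : α → α → Prop) : Prop :=
  (∀ x ∈ S, ¬ lt x x) ∧
  (∀ x ∈ S, ∀ y ∈ S, ∀ z ∈ S, lt x y → lt y z → lt x z) ∧
  (∀ x ∈ S, ∀ y ∈ S, x ≠ y → (lt x y ∨ lt y x) ∧ ¬ (lt x y ∧ lt y x))

def CompatibleOn (D : Dissim X) (S : Set X) (lt : X → X → Prop) : Prop :=
  ∀ x ∈ S, ∀ y ∈ S, ∀ z ∈ S, lt x y → lt y z → D.d x y ≤ D.d x z ∧ D.d y z ≤ D.d x z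

def IsCompatOrderOn (D : Dissim X) (S : Set X) (lt : X → X → Prop) : Prop :=
  IsStrictTotalOrderOn S lt ∧ CompatibleOn D S lt

def FlatOn (D : Dissim X) (S : Set X) : Prop :=
  ∃ lt : X → X → Prop, IsCompatOrderOn D S lt ∧ (∃ x ∈ S, ∃ y ∈ S, lt x y) ∧
    ∀ lt' : X → X → Prop, IsCompatOrderOn D S lt' →
      (∀ x ∈ S, ∀ y ∈ S, (lt' x y ↔ lt x y)) ∨ (∀ x ∈ S, ∀ y ∈ S, (lt' x y ↔ lt y x))

def Flat (D : Dissim X) : Prop :=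
  ∃ lt : X → X → Prop, IsCompatOrder D lt ∧ (∃ x y : X, lt x y) ∧
    ∀ lt' : X → X → Prop, IsCompatOrder D lt' →
      (∀ x y : X, lt' x y ↔ lt x y) ∨ (∀ x y : X, lt' x y ↔ lt y x)

def IsCopointAt (D : Dissim X) (p : X) (C : Set X) : Prop :=
  IsMmodule D C ∧ C.Nonempty ∧ p ∉ C ∧
  ∀ C' : Set X, IsMmodule D C' → p ∉ C' → C ⊆ C' → C = C'

def bigGraph (D : Dissim X) (δ : ℝ) (I : Set (Set X)) : SimpleGraph (Set X) where
  Adj C C' := C ∈ I ∧ C' ∈ I ∧ C ≠ C' ∧ ∃ x ∈ C, ∃ y ∈ C', δ < D.d x y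
  symm := by
    constructor
    rintro C C' ⟨hC, hC', hne, x, hx, y, hy, hd⟩
    exact ⟨hC', hC, hne.symm, y, hy, x, hx, by rw [D.symm]; exact hd⟩
  loopless := by constructor; rintro C ⟨-, -, hne, -⟩; exact hne rfl

/-- in a connected Robinson space, every connected component C of
G_{<δ*} is either a union of maximal mmodules, or a connected component of
G_{δ*} restricted to some maximal mmodule M with diam(M) = δ*. -/
theorem stmt14 [Fintype X] [Nonempty X] (D : Dissim X)
    (hcard : 2 ≤ Fintype.card X)
    (hpos : ∀ x y : X, x ≠ y → 0 < D.d x y)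
    (hRob : Robinson D)
    (hconn : ∀ δ : ℝ, 0 < δ → (Gdelta D δ).Connected)
    (δstar : ℝ)
    (hls : IsLeast {δ : ℝ | 0 < δ ∧ (Gle D δ).Connected} δstar)
    (C : Set X) (hC : IsCompOf (Glt D δstar) C) :
    (∃ M : Set (Set X), (∀ A ∈ M, A ∈ MMax D) ∧ C = ⋃₀ M) ∨
    (∃ M ∈ MMax D, diam D M = δstar ∧ IsCompWithin (Gdelta D δstar) M C) := by
  classical
  obtain ⟨lt, hSTO, hComp⟩ := hRob
  obtain ⟨x0, rfl⟩ := hC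
  have δpos : (0:ℝ) < δstar := hls.1.1
  have htr : ∀ a b : X, lt a b ∨ a = b ∨ lt b a := fun a b => by
    by_cases h1 : lt a b
    · exact Or.inl h1
    by_cases h2 : lt b a
    · exact Or.inr (Or.inr h2)
    exact Or.inr (Or.inl (hSTO.trichotomous a b h1 h2))
  have htrans : ∀ a b c : X, lt a b → lt b c → lt a c := fun a b c => hSTO.trans a b c
  have hirr : ∀ a : X, ¬ lt a a := fun a => hSTO.irrefl a
  set C : Set X := {y | (Glt D δstar).Reachable x0 y} with hCdef
  have hx0C : x0 ∈ C := SimpleGraph.Reachable.refl x0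
  -- L1 : cross-component distances are ≥ δstar
  have hL1 : ∀ c ∈ C, ∀ y, y ∉ C → δstar ≤ D.d c y := by
    intro c hcC y hyC
    by_contra hlt
    push_neg at hlt
    have hne : c ≠ y := by rintro rfl; exact hyC hcC
    have hadj : (Glt D δstar).Adj c y := ⟨hne, hlt⟩
    exact hyC ((show (Glt D δstar).Reachable x0 c from hcC).trans hadj.reachable)
  -- singletons are proper mmodules
  have hsingleton : ∀ x : X, IsMmodule D {x} := by
    intro x z _ a ha b hb
    rw [Set.mem_singleton_iff] at ha hb
    rw [ha, hb]
  have hsne : ∀ x : X, ({x} : Set X) ≠ Set.univ := by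
    intro x h
    obtain ⟨y, hy⟩ := Fintype.exists_ne_of_one_lt_card (by omega) x
    have : y ∈ ({x} : Set X) := h ▸ Set.mem_univ y
    exact hy (Set.mem_singleton_iff.mp this)
  -- every point lies in a maximal mmodule
  have hmaxof : ∀ x : X, ∃ M ∈ MMax D, x ∈ M := by
    intro x
    set S : Set (Set X) := {A | IsMmodule D A ∧ A ≠ Set.univ ∧ x ∈ A} with hS
    have hfin : S.Finite := Set.toFinite S
    have hne : S.Nonempty := ⟨{x}, hsingleton x, hsne x, rfl⟩
    obtain ⟨M, hMS, hMmax⟩ := Set.Finite.exists_maximalFor id S hfin hne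
    refine ⟨M, ⟨hMS.1, hMS.2.1, ?_⟩, hMS.2.2⟩
    intro M' hM'm hM'ne hsub
    exact Set.Subset.antisymm hsub (hMmax ⟨hM'm, hM'ne, hsub hMS.2.2⟩ hsub)
  by_cases hcase : ∀ A ∈ MMax D, (A ∩ C).Nonempty → A ⊆ C
  · -- C is a union of maximal mmodules
    refine Or.inl ⟨{A | A ∈ MMax D ∧ (A ∩ C).Nonempty}, fun A hA => hA.1, ?_⟩
    ext w
    constructor
    · intro hw
      obtain ⟨A, hAM, hwA⟩ := hmaxof w
      exact ⟨A, ⟨hAM, ⟨w, hwA, hw⟩⟩, hwA⟩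
    · rintro ⟨A, ⟨hAM, hAC⟩, hwA⟩
      exact hcase A hAM hAC hwA
  · push_neg at hcase
    obtain ⟨M, hMmax', hMC, hMnsub⟩ := hcase
    obtain ⟨hMmod, hMne, hMismax⟩ := hMmax'
    obtain ⟨p, hpM, hpC⟩ := Set.not_subset.mp hMnsub
    obtain ⟨xc, hxcM, hxcC⟩ := hMC
    -- C ⊆ M
    have hkey : ∀ a b : X, (Glt D δstar).Walk a b → (Glt D δstar).Reachable x0 a → a ∈ M → b ∈ M := by
      intro a b w
      induction w with
      | nil => intro _ h; exact h
      | cons hadj w ih =>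
        rename_i u c' v
        intro hra huM
        have hrc : (Glt D δstar).Reachable x0 c' := hra.trans hadj.reachable
        have hc'M : c' ∈ M := by
          by_contra hc'M
          have h1 : D.d c' u = D.d c' p := hMmod c' hc'M u huM p hpM
          have h2 : δstar ≤ D.d c' p := hL1 c' hrc p hpC
          have h3 : D.d u c' < δstar := hadj.2
          rw [D.symm] at h3
          rw [h1] at h3
          exact absurd h2 (not_le.mpr h3)
        exact ih hrc hc'M
    have hCM : C ⊆ M := by
      intro y hyC
      have hrxy : (Glt D δstar).Reachable xc y :=
        (show (Glt D δstar).Reachable x0 xc from hxcC).symm.trans hyC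
      obtain ⟨w⟩ := hrxy
      exact hkey xc y w hxcC hxcM
    have hx0M : x0 ∈ M := hCM hx0C
    -- existence of z ∉ M with d(z,m) = δstar for all m ∈ M
    obtain ⟨q, hq⟩ := (Set.ne_univ_iff_exists_notMem M).mp hMne
    have hcross : ∀ a b : X, (Gle D δstar).Walk a b → a ∈ M → b ∉ M →
        ∃ u ∈ M, ∃ z, z ∉ M ∧ D.d u z ≤ δstar := by
      intro a b w
      induction w with
      | nil => intro h h'; exact absurd h h'
      | cons hadj w ih =>
        rename_i u c' v
        intro huM hvM
        by_cases hc'M : c' ∈ M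
        · exact ih hc'M hvM
        · exact ⟨u, huM, c', hc'M, hadj.2⟩
    have hzex : ∃ u ∈ M, ∃ z, z ∉ M ∧ D.d u z ≤ δstar := by
      obtain ⟨w⟩ := hls.1.2.preconnected x0 q
      exact hcross x0 q w hx0M hq
    obtain ⟨u0, hu0M, z, hzM, hzle⟩ := hzex
    have hzC : z ∉ C := fun h => hzM (hCM h)
    have hzδ : ∀ m ∈ M, D.d z m = δstar := by
      have h1 : δstar ≤ D.d x0 z := hL1 x0 hx0C z hzC
      have h2 : D.d z u0 = D.d z x0 := hMmod z hzM u0 hu0M x0 hx0M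
      have h3 : D.d z u0 = δstar := by
        refine le_antisymm ?_ ?_
        · rw [D.symm]; exact hzle
        · rw [h2, D.symm]; exact h1
      intro m hm
      rw [hMmod z hzM m hm u0 hu0M, h3]
    -- M is an interval of the compatible order
    have hint : ∀ u v w : X, u ∈ M → v ∈ M → lt u w → lt w v → w ∈ M := by
      set I : Set X := M ∪ {w | ∃ u ∈ M, ∃ v ∈ M, lt u w ∧ lt w v} with hI
      have hImm : IsMmodule D I := by
        intro z' hz' x hx y hy
        have hz'M : z' ∉ M := fun h => hz' (Or.inl h)
        have hside : (∀ m ∈ M, lt z' m) ∨ (∀ m ∈ M, lt m z') := by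
          by_contra hcon
          push_neg at hcon
          obtain ⟨⟨m, hm, h1⟩, ⟨m', hm', h2⟩⟩ := hcon
          have hzm : lt m z' := by
            rcases htr z' m with h | h | h
            · exact absurd h h1
            · exact absurd h.symm (fun h => hz'M (h ▸ hm))
            · exact h
          have hzm' : lt z' m' := by
            rcases htr z' m' with h | h | h
            · exact h
            · exact absurd h (fun h => hz'M (h ▸ hm'))
            · exact absurd h h2
          exact hz' (Or.inr ⟨m, hm, m', hm', hzm, hzm'⟩)
        have hval : ∀ x' ∈ I, D.d z' x' = D.d z' xc := by
          intro x' hx'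
          rcases hx' with hx'M | ⟨u, hu, v, hv, hux, hxv⟩
          · exact hMmod z' hz'M x' hx'M xc hxcM
          · rcases hside with hL | hR
            · have hzu : lt z' u := hL u hu
              have h1 : D.d z' u ≤ D.d z' x' := (hComp z' u x' hzu hux).1
              have h2 : D.d z' x' ≤ D.d z' v := (hComp z' x' v (htrans _ _ _ hzu hux) hxv).1
              have h3 : D.d z' u = D.d z' xc := hMmod z' hz'M u hu xc hxcM
              have h4 : D.d z' v = D.d z' xc := hMmod z' hz'M v hv xc hxcM
              rw [h3] at h1; rw [h4] at h2
              exact le_antisymm h2 h1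
            · have hvz : lt v z' := hR v hv
              have h1 : D.d v z' ≤ D.d x' z' := (hComp x' v z' hxv hvz).2
              have h2 : D.d x' z' ≤ D.d u z' := (hComp u x' z' hux (htrans _ _ _ hxv hvz)).2
              have h3 : D.d z' u = D.d z' xc := hMmod z' hz'M u hu xc hxcM
              have h4 : D.d z' v = D.d z' xc := hMmod z' hz'M v hv xc hxcM
              have h1' : D.d z' v ≤ D.d z' x' := by
                rw [D.symm z' v, D.symm z' x']; exact h1
              have h2' : D.d z' x' ≤ D.d z' u := by
                rw [D.symm z' x', D.symm z' u]; exact h2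
              rw [h4] at h1'; rw [h3] at h2'
              exact le_antisymm h2' h1'
        rw [hval x hx, hval y hy]
      have hIne : I ≠ Set.univ := by
        intro hIu
        have hbet : ∀ z' , z' ∉ M → ∃ u ∈ M, ∃ v ∈ M, lt u z' ∧ lt z' v := by
          intro z' hz'M
          have : z' ∈ I := hIu ▸ Set.mem_univ z'
          rcases this with h | h
          · exact absurd h hz'M
          · exact h
        -- all distances from outside M to M are equal
        have hconst : ∀ a, a ∉ M → ∀ b, b ∉ M → lt a b → D.d a xc ≤ D.d b xc := by
          intro a haM b hbM hab
          obtain ⟨u, hu, -, -, hua, -⟩ := hbet a haM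
          have h1 : D.d u a ≤ D.d u b := (hComp u a b hua hab).1
          have h2 : D.d u a = D.d a xc := by rw [D.symm]; exact hMmod a haM u hu xc hxcM
          have h3 : D.d u b = D.d b xc := by rw [D.symm]; exact hMmod b hbM u hu xc hxcM
          rw [h2, h3] at h1; exact h1
        have hconst2 : ∀ a, a ∉ M → D.d a xc = D.d z xc := by
          intro a haM
          rcases htr a z with h | h | h
          · refine le_antisymm (hconst a haM z hzM h) ?_
            obtain ⟨-, -, v, hv, -, hbv⟩ := hbet z hzM
            have h1 : D.d z v ≤ D.d a v := (hComp a z v h hbv).2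
            have h2 : D.d z v = D.d z xc := hMmod z hzM v hv xc hxcM
            have h3 : D.d a v = D.d a xc := hMmod a haM v hv xc hxcM
            rw [h2, h3] at h1; exact h1
          · rw [h]
          · refine le_antisymm ?_ (hconst z hzM a haM h)
            obtain ⟨-, -, v, hv, -, hbv⟩ := hbet a haM
            have h1 : D.d a v ≤ D.d z v := (hComp z a v h hbv).2
            have h2 : D.d z v = D.d z xc := hMmod z hzM v hv xc hxcM
            have h3 : D.d a v = D.d a xc := hMmod a haM v hv xc hxcM
            rw [h2, h3] at h1; exact h1
        set α : ℝ := D.d z xc with hα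
        have hαδ : α = δstar := hzδ xc hxcM
        have hαpos : 0 < α := by rw [hαδ]; exact δpos
        have hwalk : ∀ a b : X, (Gdelta D α).Walk a b → a ∉ M → b ∉ M := by
          intro a b w
          induction w with
          | nil => intro h; exact h
          | cons hadj w ih =>
            rename_i u c' v
            intro huM
            have hc'M : c' ∉ M := by
              intro hc'
              have : D.d u c' = α := by
                rw [show D.d u c' = D.d u xc from hMmod u huM c' hc' xc hxcM]
                exact hconst2 u huM
              exact hadj.2 this
            exact ih hc'M
        obtain ⟨w⟩ := (hconn α hαpos).preconnected z xc
        exact (hwalk z xc w hzM) hxcM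
      have hMI : M = I := hMismax I hImm hIne Set.subset_union_left
      intro u v w hu hv huw hwv
      have : w ∈ I := Or.inr ⟨u, hu, v, hv, huw, hwv⟩
      rw [hMI]; exact this
    -- diameter bound : all distances within M are ≤ δstar
    have haux : ∀ u ∈ M, ∀ v ∈ M, lt u v → D.d u v ≤ δstar := by
      intro u hu v hv huv
      rcases htr z u with h | h | h
      · have := (hComp z u v h huv).2
        rw [hzδ v hv] at this; exact this
      · exact absurd (h ▸ hu) hzM
      · rcases htr z v with h' | h' | h'
        · exact absurd (hint u v z hu hv h h') hzM
        · exact absurd (h' ▸ hv) hzM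
        · have := (hComp u v z huv h').1
          rw [show D.d u z = δstar from by rw [D.symm]; exact hzδ u hu] at this
          exact this
    have hdiam_le : ∀ u ∈ M, ∀ v ∈ M, D.d u v ≤ δstar := by
      intro u hu v hv
      rcases htr u v with h | h | h
      · exact haux u hu v hv h
      · rw [h, D.self]; exact le_of_lt δpos
      · rw [D.symm]; exact haux v hv u hu h
    -- diam M = δstar
    have hdxcp : D.d xc p = δstar :=
      le_antisymm (hdiam_le xc hxcM p hpM) (hL1 xc hxcC p hpC)
    have hdiam : diam D M = δstar := by
      unfold diam
      apply le_antisymm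
      · apply Real.sSup_le
        · rintro r ⟨a, ha, b, hb, rfl⟩
          exact hdiam_le a ha b hb
        · exact le_of_lt δpos
      · exact le_csSup ⟨δstar, by rintro r ⟨a, ha, b, hb, rfl⟩; exact hdiam_le a ha b hb⟩
          ⟨xc, hxcM, p, hpM, hdxcp⟩
    refine Or.inr ⟨M, ⟨hMmod, hMne, hMismax⟩, hdiam, x0, hx0M, ?_⟩
    -- C is the component of x0 in Gdelta δstar restricted to M
    have hfwd : ∀ a b : X, (Glt D δstar).Walk a b → (Glt D δstar).Reachable x0 a →
        ((Gdelta D δstar).restrictTo M).Reachable a b := by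
      intro a b w
      induction w with
      | nil => intro _; exact SimpleGraph.Reachable.refl _
      | cons hadj w ih =>
        rename_i u c' v
        intro hra
        have hrc : (Glt D δstar).Reachable x0 c' := hra.trans hadj.reachable
        have huM : u ∈ M := hCM hra
        have hc'M : c' ∈ M := hCM hrc
        have hadjR : ((Gdelta D δstar).restrictTo M).Adj u c' :=
          ⟨huM, hc'M, hadj.1, ne_of_lt hadj.2⟩
        exact hadjR.reachable.trans (ih hrc)
    have hbwd : ∀ a b : X, ((Gdelta D δstar).restrictTo M).Walk a b →
        (Glt D δstar).Reachable a b := by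
      intro a b w
      induction w with
      | nil => exact SimpleGraph.Reachable.refl _
      | cons hadj w ih =>
        rename_i u c' v
        obtain ⟨huM, hc'M, hne, hneq⟩ := hadj
        have hlt : D.d u c' < δstar := lt_of_le_of_ne (hdiam_le u huM c' hc'M) hneq
        exact (SimpleGraph.Adj.reachable (⟨hne, hlt⟩ : (Glt D δstar).Adj u c')).trans ih
    ext y
    constructor
    · intro hy
      obtain ⟨w⟩ := (show (Glt D δstar).Reachable x0 y from hy)
      exact hfwd x0 y w (SimpleGraph.Reachable.refl x0)
    · intro hy
      obtain ⟨w⟩ := (show ((Gdelta D δstar).restrictTo M).Reachable x0 y from hy)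
      exact hbwd x0 y w
end

section
/- Let (X,d) be a dissimilarity space and p ∈ X. Then the p-copoints of (X,d) are pairwise disjoint, none of them contains p, and together with the singleton {p} they form a partition of X. -/
variable {X : Type*}

lemma mmodule_union (D : Dissim X) {M N : Set X} (hM : IsMmodule D M)
    (hN : IsMmodule D N) (hMN : (M ∩ N).Nonempty) : IsMmodule D (M ∪ N) := by
  obtain ⟨w, hwM, hwN⟩ := hMN
  intro z hz x hx y hy
  have hzM : z ∉ M := fun h => hz (Or.inl h)
  have hzN : z ∉ N := fun h => hz (Or.inr h)
  have key : ∀ a, a ∈ M ∪ N → D.d z a = D.d z w := by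
    rintro a (ha | ha)
    · exact hM z hzM a ha w hwM
    · exact hN z hzN a ha w hwN
  rw [key x hx, key y hy]

lemma mmodule_singleton (D : Dissim X) (x : X) : IsMmodule D {x} := by
  rintro z _ a rfl b rfl; rfl

lemma exists_copoint [Fintype X] (D : Dissim X) {p x : X} (h : x ≠ p) :
    ∃ C : Set X, IsCopointAt D p C ∧ x ∈ C := by
  set S : Set (Set X) := {M | IsMmodule D M ∧ p ∉ M ∧ x ∈ M} with hS
  have hfin : S.Finite := Set.toFinite S
  have hne : S.Nonempty := ⟨{x}, mmodule_singleton D x, by simpa using fun e => h e.symm, rfl⟩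
  obtain ⟨C, hCS, hmax⟩ : ∃ C ∈ S, ∀ C' ∈ S, C ⊆ C' → C = C' := by
    obtain ⟨C, hC⟩ := hfin.exists_maximal hne
    exact ⟨C, hC.1, fun C' h1 h2 => le_antisymm h2 (hC.2 h1 h2)⟩
  refine ⟨C, ⟨hCS.1, ⟨x, hCS.2.2⟩, hCS.2.1, ?_⟩, hCS.2.2⟩
  intro C' hC' hpC' hsub
  exact hmax C' ⟨hC', hpC', hsub hCS.2.2⟩ hsub

/-- the p-copoints are pairwise disjoint, avoid p, and together with
{p} they partition X. -/
theorem stmt18 [Fintype X] [Nonempty X] (D : Dissim X) (p : X) :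
    (∀ C₁ C₂ : Set X, IsCopointAt D p C₁ → IsCopointAt D p C₂ → C₁ ≠ C₂ →
      Disjoint C₁ C₂) ∧
    (∀ C : Set X, IsCopointAt D p C → p ∉ C) ∧
    IsPartition ({C : Set X | IsCopointAt D p C} ∪ {{p}}) := by
  have disj : ∀ C₁ C₂ : Set X, IsCopointAt D p C₁ → IsCopointAt D p C₂ → C₁ ≠ C₂ →
      Disjoint C₁ C₂ := by
    intro C₁ C₂ h₁ h₂ hne
    rw [Set.disjoint_iff_inter_eq_empty]
    by_contra hcap
    have hcap' : (C₁ ∩ C₂).Nonempty := Set.nonempty_iff_ne_empty.2 hcap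
    have hu : IsMmodule D (C₁ ∪ C₂) := mmodule_union D h₁.1 h₂.1 hcap'
    have hpu : p ∉ C₁ ∪ C₂ := by rintro (h | h); exacts [h₁.2.2.1 h, h₂.2.2.1 h]
    have e₁ := h₁.2.2.2 (C₁ ∪ C₂) hu hpu Set.subset_union_left
    have e₂ := h₂.2.2.2 (C₁ ∪ C₂) hu hpu Set.subset_union_right
    exact hne (e₁.trans e₂.symm)
  refine ⟨disj, fun C hC => hC.2.2.1, ?_, ?_, ?_⟩
  · rintro A (hA | hA)
    · exact hA.2.1
    · simp at hA; subst hA; exact ⟨p, rfl⟩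
  · rintro A (hA | hA) B (hB | hB) hne
    · exact disj A B hA hB hne
    · simp at hB; subst hB
      rw [Set.disjoint_singleton_right]; exact hA.2.2.1
    · simp at hA; subst hA
      rw [Set.disjoint_singleton_left]; exact hB.2.2.1
    · simp at hA hB; subst hA; subst hB; exact absurd rfl hne
  · ext x
    simp only [Set.mem_sUnion, Set.mem_univ, iff_true]
    by_cases hx : x = p
    · exact ⟨{p}, Or.inr rfl, by simp [hx]⟩
    · obtain ⟨C, hC, hxC⟩ := exists_copoint D hx
      exact ⟨C, Or.inl hC, hxC⟩
end
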